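/- arXiv:1612.01137 — 3 statements merged into one kernel-verified Lean document; each statement's English description precedes it below -/
import Mathlib

section
/- Every minimiser μ of I over probability measures on ℝ² has compact support. -/
open MeasureTheory Real
open scoped ENNReal Classical FourierTransform RealInnerProductSpace ComplexOrder

noncomputable section

abbrev E2 : Type := EuclideanSpace ℝ (Fin 2)

/-- The anisotropic interaction potential `V(x) = -log|x| + x₁²/|x|²`
(with the junk value `V 0 = 0`; the set where the true value `+∞` matters
is handled separately). -/
def V (x : E2) : ℝ := -Real.log ‖x‖ + (x 0) ^ 2 / ‖x‖ ^ 2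

/-- A measure has compact support. -/
def HasCompactMeasureSupport (μ : Measure E2) : Prop :=
  ∃ K : Set E2, IsCompact K ∧ μ Kᶜ = 0

/-- Finite interaction energy `∬ V(x-y) dμ(x) dμ(y) < ∞`: the diagonal
(where `V = +∞`) is null and `V(x-y)` is integrable. -/
def FiniteInteractionEnergy (μ : Measure E2) : Prop :=
  (μ.prod μ) {p : E2 × E2 | p.1 = p.2} = 0 ∧
    Integrable (fun p : E2 × E2 => V (p.1 - p.2)) (μ.prod μ)

/-- The interaction energy `∬ V(x-y) dμ(x) dμ(y)` as a real number. -/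
def interEnergy (μ ν : Measure E2) : ℝ := ∫ p : E2 × E2, V (p.1 - p.2) ∂(μ.prod ν)

/-- The total energy `I(μ) = ∬ V(x-y) dμdμ + ∫ |x|² dμ`, with values in `[0,∞]`,
written as `∬ (V(x-y) + (|x|²+|y|²)/2) dμdμ` (valid since `μ` is a probability
measure); the integrand is `+∞` on the diagonal and nonnegative elsewhere. -/
def Ienergy (μ : Measure E2) : ℝ≥0∞ :=
  ∫⁻ p : E2 × E2,
    (if p.1 = p.2 then (⊤ : ℝ≥0∞)
      else ENNReal.ofReal (V (p.1 - p.2) + (‖p.1‖ ^ 2 + ‖p.2‖ ^ 2) / 2)) ∂(μ.prod μ)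

/-- The semi-circle law `m₁ = (1/π) δ₀ ⊗ √(2-t²) H¹⌞(-√2,√2)` on `ℝ²`. -/
def m1 : Measure E2 :=
  Measure.map (fun t : ℝ => (WithLp.toLp 2 ![0, t] : E2))
    ((volume.restrict (Set.Ioo (-Real.sqrt 2) (Real.sqrt 2))).withDensity
      (fun t => ENNReal.ofReal (Real.sqrt (2 - t ^ 2) / Real.pi)))

/-- The potential `(V ∗ μ)(x) = ∫ V(x-y) dμ(y)`. -/
def Vconv (μ : Measure E2) (x : E2) : ℝ := ∫ y, V (x - y) ∂μ

/-- The support of a measure: points all of whose neighbourhoods have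
positive measure. -/
def msupp (μ : Measure E2) : Set E2 := {x : E2 | ∀ U ∈ nhds x, 0 < μ U}



/-! ### Auxiliary definitions and lemmas -/

/-- The integrand of `Ienergy`. -/
def Fk (p : E2 × E2) : ℝ≥0∞ :=
  if p.1 = p.2 then (⊤ : ℝ≥0∞)
    else ENNReal.ofReal (V (p.1 - p.2) + (‖p.1‖ ^ 2 + ‖p.2‖ ^ 2) / 2)

lemma Ienergy_eq (μ : Measure E2) : Ienergy μ = ∫⁻ p, Fk p ∂(μ.prod μ) := rfl

lemma measurable_V : Measurable V := by
  apply Measurable.add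
  · exact (Real.measurable_log.comp measurable_norm).neg
  · exact (((measurable_pi_apply 0).comp (WithLp.measurable_ofLp 2 (Fin 2 → ℝ))).pow_const 2).div ((measurable_norm (α := E2)).pow_const 2)

lemma measurable_Fk : Measurable Fk := by
  apply Measurable.ite (isClosed_eq continuous_fst continuous_snd).measurableSet measurable_const
  have h1 : Measurable fun p : E2 × E2 => V (p.1 - p.2) :=
    measurable_V.comp (measurable_fst.sub measurable_snd)
  have h2 : Measurable fun p : E2 × E2 => (‖p.1‖ ^ 2 + ‖p.2‖ ^ 2) / 2 :=
    ((((measurable_norm (α := E2)).comp measurable_fst).pow_const 2).add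
      (((measurable_norm (α := E2)).comp measurable_snd).pow_const 2)).div_const 2
  exact (h1.add h2).ennreal_ofReal

lemma V_lower {x y : E2} {R : ℝ} (hR : 3 ≤ R) (h : R ≤ ‖x‖ ∨ R ≤ ‖y‖) (hxy : x ≠ y) :
    R ^ 2 / 8 ≤ V (x - y) + (‖x‖ ^ 2 + ‖y‖ ^ 2) / 2 := by
  have hr : 0 < ‖x - y‖ := by rw [norm_sub_pos_iff]; exact hxy
  have hq : 0 ≤ ((x - y) 0) ^ 2 / ‖x - y‖ ^ 2 := by positivity
  have hlog : Real.log ‖x - y‖ ≤ ‖x - y‖ - 1 := Real.log_le_sub_one_of_pos hr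
  have h2 : ‖x - y‖ ^ 2 ≤ 2 * (‖x‖ ^ 2 + ‖y‖ ^ 2) := by
    have h := norm_sub_le x y
    nlinarith [norm_nonneg x, norm_nonneg y, sq_nonneg (‖x‖ - ‖y‖), norm_nonneg (x - y)]
  have h3 : R ^ 2 ≤ ‖x‖ ^ 2 + ‖y‖ ^ 2 := by
    rcases h with h | h
    · nlinarith [norm_nonneg y, norm_nonneg x]
    · nlinarith [norm_nonneg y, norm_nonneg x]
  rw [V]
  nlinarith [sq_nonneg (‖x - y‖ - 4)]

/-- The embedding `t ↦ (t, 0)` of `ℝ` into `ℝ²`. -/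
def phi (t : ℝ) : E2 := WithLp.toLp 2 ![t, 0]

lemma measurable_phi : Measurable phi :=
  (WithLp.measurable_toLp 2 (Fin 2 → ℝ)).comp <| measurable_pi_lambda (fun t : ℝ => ![t, 0]) fun i => by
    fin_cases i
    · exact measurable_id
    · exact measurable_const

lemma phi_inj : Function.Injective phi := fun t s h => by
  simpa [phi] using congrArg (fun x : E2 => x 0) h

lemma norm_phi (t : ℝ) : ‖phi t‖ = |t| := by
  rw [EuclideanSpace.norm_eq]
  simp [phi, Fin.sum_univ_two, Real.norm_eq_abs, sq_abs]
  exact Real.sqrt_sq_eq_abs t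

lemma phi_sub (t s : ℝ) : phi t - phi s = phi (t - s) := by
  ext i
  rw [PiLp.sub_apply]
  fin_cases i <;> simp [phi]

/-- The finite quantity controlling the reference energy. -/
def J : ℝ≥0∞ := ∫⁻ u in Set.Ioc (0:ℝ) 1, ENNReal.ofReal (-Real.log u + 2)

lemma J_ne_top : J ≠ ⊤ := by
  have h1 : IntervalIntegrable (fun u : ℝ => 2 * u ^ (-(1:ℝ)/2) + 2) volume 0 1 :=
    ((intervalIntegral.intervalIntegrable_rpow' (by norm_num)).const_mul 2).add
      intervalIntegrable_const
  rw [intervalIntegrable_iff_integrableOn_Ioc_of_le zero_le_one] at h1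
  have hb : ∫⁻ u in Set.Ioc (0:ℝ) 1, ENNReal.ofReal (-Real.log u + 2) ≤
      ∫⁻ u in Set.Ioc (0:ℝ) 1, ↑‖2 * u ^ (-(1:ℝ)/2) + 2‖₊ := by
    apply setLIntegral_mono
    · have : Measurable fun u : ℝ => 2 * u ^ (-(1:ℝ)/2) + 2 := by fun_prop
      exact this.nnnorm.coe_nnreal_ennreal
    · intro u hu
      have h0 : 0 < u := hu.1
      have hrp : 0 < u ^ (-(1:ℝ)/2) := Real.rpow_pos_of_pos h0 _
      have hlog : -Real.log u ≤ 2 * u ^ (-(1:ℝ)/2) := by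
        have h := Real.log_le_sub_one_of_pos hrp
        rw [Real.log_rpow h0] at h
        nlinarith
      rw [← enorm_eq_nnnorm, Real.enorm_eq_ofReal (by positivity)]
      exact ENNReal.ofReal_le_ofReal (by linarith)
  exact (lt_of_le_of_lt hb h1.2).ne

lemma inner_bound {t : ℝ} (ht : t ∈ Set.Ioc (0:ℝ) 1) :
    ∫⁻ s in Set.Ioc (0:ℝ) 1, ENNReal.ofReal (-Real.log |t - s| + 2) ≤ 2 * J := by
  have hmp : MeasurePreserving (fun s : ℝ => t - s) volume volume :=
    Measure.measurePreserving_sub_left volume t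
  have hemb : MeasurableEmbedding (fun s : ℝ => t - s) :=
    (Homeomorph.subLeft t).measurableEmbedding
  have habs : ∀ c : ℝ, ∫⁻ u in Set.Ioc (0:ℝ) c, ENNReal.ofReal (-Real.log |u| + 2) =
      ∫⁻ u in Set.Ioc (0:ℝ) c, ENNReal.ofReal (-Real.log u + 2) := by
    intro c
    apply setLIntegral_congr_fun measurableSet_Ioc
    intro u hu
    simp only
    rw [abs_of_pos hu.1]
  have hneg : ∫⁻ u in Set.Ioc (-1:ℝ) 0, ENNReal.ofReal (-Real.log |u| + 2) ≤ J := by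
    have hmpn : MeasurePreserving (fun u : ℝ => -u) volume volume :=
      Measure.measurePreserving_neg volume
    have hembn : MeasurableEmbedding (fun u : ℝ => -u) :=
      (Homeomorph.neg ℝ).measurableEmbedding
    have := hmpn.setLIntegral_comp_emb hembn
      (fun u => ENNReal.ofReal (-Real.log |u| + 2)) (Set.Ico (0:ℝ) 1)
    have himg : (fun u : ℝ => -u) '' Set.Ico (0:ℝ) 1 = Set.Ioc (-1:ℝ) 0 := by
      rw [Set.image_neg_eq_neg, Set.neg_Ico]
      norm_num
    rw [himg] at this
    rw [← this]
    have : ∫⁻ u in Set.Ico (0:ℝ) 1, ENNReal.ofReal (-Real.log |(-u)| + 2) =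
        ∫⁻ u in Set.Ioc (0:ℝ) 1, ENNReal.ofReal (-Real.log |u| + 2) := by
      rw [Measure.restrict_congr_set Ico_ae_eq_Ioc]
      simp only [abs_neg]
    rw [this, habs]
    exact le_of_eq rfl
  calc ∫⁻ s in Set.Ioc (0:ℝ) 1, ENNReal.ofReal (-Real.log |t - s| + 2)
      = ∫⁻ u in (fun s : ℝ => t - s) '' Set.Ioc (0:ℝ) 1,
          ENNReal.ofReal (-Real.log |u| + 2) :=
        hmp.setLIntegral_comp_emb hemb (fun u => ENNReal.ofReal (-Real.log |u| + 2)) _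
    _ ≤ ∫⁻ u in Set.Ioc (-1:ℝ) 0 ∪ Set.Ioc (0:ℝ) 1,
          ENNReal.ofReal (-Real.log |u| + 2) := by
        apply lintegral_mono_set
        rintro u ⟨s, hs, rfl⟩
        rcases le_or_gt (t - s) 0 with h | h
        · exact Set.mem_union_left _
            ⟨show (-1:ℝ) < t - s by simp only [Set.mem_Ioc] at hs; linarith [ht.1, hs.2], h⟩
        · exact Set.mem_union_right _
            ⟨h, show t - s ≤ 1 by simp only [Set.mem_Ioc] at hs; linarith [ht.2, hs.1]⟩
    _ ≤ (∫⁻ u in Set.Ioc (-1:ℝ) 0, ENNReal.ofReal (-Real.log |u| + 2)) +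
        ∫⁻ u in Set.Ioc (0:ℝ) 1, ENNReal.ofReal (-Real.log |u| + 2) := lintegral_union_le _ _ _
    _ ≤ J + J := add_le_add hneg (le_of_eq (habs 1))
    _ = 2 * J := (two_mul J).symm

/-- The reference measure: uniform measure on `(0,1]`. -/
def lam1 : Measure ℝ := volume.restrict (Set.Ioc (0:ℝ) 1)

lemma lam1_prob : IsProbabilityMeasure lam1 := by
  constructor
  rw [lam1, Measure.restrict_apply_univ, Real.volume_Ioc]
  norm_num

/-- The reference measure on `ℝ²`: uniform measure on a horizontal unit segment. -/
def nu0 : Measure E2 := lam1.map phi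

lemma nu0_prob : IsProbabilityMeasure nu0 := by
  haveI := lam1_prob
  exact Measure.isProbabilityMeasure_map measurable_phi.aemeasurable

lemma Fk_phi_le {t s : ℝ} (ht : t ∈ Set.Ioc (0:ℝ) 1) (hs : s ∈ Set.Ioc (0:ℝ) 1) :
    Fk (phi t, phi s) ≤ (Set.diagonal ℝ).indicator (fun _ => (⊤ : ℝ≥0∞)) (t, s) +
      ENNReal.ofReal (-Real.log |t - s| + 2) := by
  by_cases hts : t = s
  · rw [Set.indicator_of_mem (by simpa [Set.mem_diagonal_iff] using hts)]
    exact le_top.trans (le_add_right le_rfl)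
  · have hφts : phi t ≠ phi s := fun h => hts (phi_inj h)
    rw [Set.indicator_of_notMem (by simpa [Set.mem_diagonal_iff] using hts), zero_add]
    rw [Fk, if_neg hφts]
    apply ENNReal.ofReal_le_ofReal
    have hne : t - s ≠ 0 := sub_ne_zero.mpr hts
    rw [phi_sub, V, norm_phi, norm_phi, norm_phi]
    have h1 : (phi (t - s)) 0 = t - s := rfl
    rw [h1, Real.log_abs]
    have h2 : (t - s) ^ 2 / |t - s| ^ 2 = 1 := by
      rw [sq_abs]
      exact div_self (pow_ne_zero 2 hne)
    rw [h2]
    have h3 : |t| ^ 2 + |s| ^ 2 ≤ 2 := by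
      rw [sq_abs, sq_abs]
      simp only [Set.mem_Ioc] at ht hs
      nlinarith [ht.1, ht.2, hs.1, hs.2]
    linarith

lemma Ienergy_nu0_ne_top : Ienergy nu0 ≠ ⊤ := by
  haveI := lam1_prob
  rw [Ienergy_eq]
  have hmap : nu0.prod nu0 = (lam1.prod lam1).map (Prod.map phi phi) :=
    Measure.map_prod_map _ _ measurable_phi measurable_phi
  rw [hmap, lintegral_map measurable_Fk (measurable_phi.prodMap measurable_phi)]
  have hdiagmeas : MeasurableSet (Set.diagonal ℝ) := isClosed_diagonal.measurableSet
  have hGmeas : Measurable fun p : ℝ × ℝ =>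
      (Set.diagonal ℝ).indicator (fun _ => (⊤ : ℝ≥0∞)) p := measurable_const.indicator hdiagmeas
  have hbound : ∫⁻ p : ℝ × ℝ, Fk (Prod.map phi phi p) ∂(lam1.prod lam1) ≤
      ∫⁻ p : ℝ × ℝ, ((Set.diagonal ℝ).indicator (fun _ => (⊤ : ℝ≥0∞)) p +
        ENNReal.ofReal (-Real.log |p.1 - p.2| + 2)) ∂(lam1.prod lam1) := by
    apply lintegral_mono_ae
    rw [lam1, Measure.prod_restrict]
    filter_upwards [ae_restrict_mem (measurableSet_Ioc.prod measurableSet_Ioc)] with p hp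
    exact Fk_phi_le hp.1 hp.2
  have hsplit : ∫⁻ p : ℝ × ℝ, ((Set.diagonal ℝ).indicator (fun _ => (⊤ : ℝ≥0∞)) p +
        ENNReal.ofReal (-Real.log |p.1 - p.2| + 2)) ∂(lam1.prod lam1) =
      (∫⁻ p : ℝ × ℝ, (Set.diagonal ℝ).indicator (fun _ => (⊤ : ℝ≥0∞)) p ∂(lam1.prod lam1)) +
      ∫⁻ p : ℝ × ℝ, ENNReal.ofReal (-Real.log |p.1 - p.2| + 2) ∂(lam1.prod lam1) :=
    lintegral_add_left hGmeas _
  have hdiag0 : (∫⁻ p : ℝ × ℝ, (Set.diagonal ℝ).indicator (fun _ => (⊤ : ℝ≥0∞)) p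
      ∂(lam1.prod lam1)) = 0 := by
    rw [lintegral_indicator hdiagmeas, setLIntegral_const]
    have h0 : (lam1.prod lam1) (Set.diagonal ℝ) = 0 := by
      rw [Measure.prod_apply hdiagmeas]
      have hpre : ∀ x : ℝ, Prod.mk x ⁻¹' Set.diagonal ℝ = {x} := by
        intro x; ext y; simp [Set.mem_diagonal_iff, eq_comm]
      have hsing : ∀ x : ℝ, lam1 {x} = 0 := fun x =>
        le_antisymm (le_trans (Measure.restrict_le_self _) (by simp)) zero_le'
      simp [hpre, hsing]
    rw [h0, mul_zero]
  have hsecond : ∫⁻ p : ℝ × ℝ, ENNReal.ofReal (-Real.log |p.1 - p.2| + 2)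
      ∂(lam1.prod lam1) ≤ 2 * J := by
    have hm : AEMeasurable (fun p : ℝ × ℝ => ENNReal.ofReal (-Real.log |p.1 - p.2| + 2))
        (lam1.prod lam1) := by
      apply Measurable.aemeasurable
      exact ((Real.measurable_log.comp (measurable_fst.sub measurable_snd).abs).neg.add_const
        2).ennreal_ofReal
    rw [lintegral_prod _ hm]
    calc ∫⁻ t, ∫⁻ s, ENNReal.ofReal (-Real.log |t - s| + 2) ∂lam1 ∂lam1
        ≤ ∫⁻ _ in Set.Ioc (0:ℝ) 1, 2 * J ∂volume := by
          rw [lam1]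
          apply setLIntegral_mono measurable_const
          intro t ht
          exact inner_bound ht
      _ = 2 * J := by
          rw [setLIntegral_const, Real.volume_Ioc]
          norm_num
  refine ne_top_of_le_ne_top ?_ (hbound.trans_eq hsplit)
  rw [hdiag0, zero_add]
  exact (lt_of_le_of_lt hsecond
    (ENNReal.mul_lt_top (by norm_num) (lt_top_iff_ne_top.mpr J_ne_top))).ne

/-- Every minimiser of `I` over probability measures on `ℝ²` has compact
support. -/
theorem minimiser_has_compact_support (μ : Measure E2)
    (hμ : IsProbabilityMeasure μ)
    (hmin : ∀ ν : Measure E2, IsProbabilityMeasure ν → Ienergy μ ≤ Ienergy ν) :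
    HasCompactMeasureSupport μ := by
  show ∃ K : Set E2, IsCompact K ∧ μ Kᶜ = 0
  by_contra hcon
  push_neg at hcon
  set T := Ienergy μ with hT
  have hTtop : T ≠ ⊤ := ne_top_of_le_ne_top Ienergy_nu0_ne_top (hmin nu0 nu0_prob)
  have hn : ∃ n : ℕ, μ (Metric.closedBall (0:E2) n) ≠ 0 := by
    by_contra hforall
    push_neg at hforall
    have huniv : (Set.univ : Set E2) ⊆ ⋃ n : ℕ, Metric.closedBall 0 n := fun x _ => by
      obtain ⟨n, hxn⟩ := exists_nat_ge ‖x‖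
      exact Set.mem_iUnion.mpr ⟨n, by simpa [Metric.mem_closedBall, dist_zero_right] using hxn⟩
    have h0 : μ Set.univ = 0 :=
      measure_mono_null huniv (measure_iUnion_null fun n => hforall n)
    simp [measure_univ] at h0
  obtain ⟨n, hn⟩ := hn
  set R : ℝ := max (max 3 (n:ℝ)) (Real.sqrt (8 * ((3 * T).toReal + 1))) with hRdef
  have hR3 : (3:ℝ) ≤ R := le_max_of_le_left (le_max_left _ _)
  have h3T : 3 * T ≠ ⊤ := ENNReal.mul_ne_top (by norm_num) hTtop
  have hc : 3 * T < ENNReal.ofReal (R ^ 2 / 8) := by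
    rw [ENNReal.lt_ofReal_iff_toReal_lt h3T]
    have h1 : Real.sqrt (8 * ((3*T).toReal + 1)) ≤ R := le_max_right _ _
    have h2 : (0:ℝ) ≤ 8 * ((3*T).toReal + 1) := by positivity
    have h4 := Real.sq_sqrt h2
    nlinarith [Real.sqrt_nonneg (8 * ((3*T).toReal + 1))]
  set B := Metric.closedBall (0:E2) R with hB
  have hBmeas : MeasurableSet B := measurableSet_closedBall
  set a := μ B with hadef
  set b := μ Bᶜ with hbdef
  have hb0 : b ≠ 0 := hcon B (isCompact_closedBall 0 R)
  have ha0 : a ≠ 0 := by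
    intro h
    exact hn (measure_mono_null (Metric.closedBall_subset_closedBall
      (le_max_of_le_left (le_max_right 3 (n:ℝ)))) h)
  have ha1 : a ≤ 1 := prob_le_one
  have hb1 : b ≤ 1 := prob_le_one
  have hatop : a ≠ ⊤ := (lt_of_le_of_lt ha1 ENNReal.one_lt_top).ne
  have hbtop : b ≠ ⊤ := (lt_of_le_of_lt hb1 ENNReal.one_lt_top).ne
  have hainvtop : a⁻¹ ≠ ⊤ := by
    rw [Ne, ENNReal.inv_eq_top]
    exact ha0
  set ν : Measure E2 := a⁻¹ • μ.restrict B with hν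
  have hνprob : IsProbabilityMeasure ν := by
    constructor
    rw [hν, Measure.smul_apply, Measure.restrict_apply_univ, smul_eq_mul]
    exact ENNReal.inv_mul_cancel ha0 hatop
  haveI := hνprob
  set S := ∫⁻ p in B ×ˢ B, Fk p ∂(μ.prod μ) with hS
  have hS_alt : S = ∫⁻ x in B, ∫⁻ y in B, Fk (x, y) ∂μ ∂μ := by
    rw [hS, ← Measure.prod_restrict, lintegral_prod _ measurable_Fk.aemeasurable]
  have hIν : Ienergy ν = a⁻¹ * (a⁻¹ * S) := by
    rw [Ienergy_eq, lintegral_prod _ measurable_Fk.aemeasurable]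
    have hinner : ∀ x : E2, ∫⁻ y, Fk (x, y) ∂ν = a⁻¹ * ∫⁻ y in B, Fk (x, y) ∂μ := by
      intro x
      rw [hν, lintegral_smul_measure, smul_eq_mul]
    calc ∫⁻ x, ∫⁻ y, Fk (x, y) ∂ν ∂ν = ∫⁻ x, a⁻¹ * ∫⁻ y in B, Fk (x, y) ∂μ ∂ν := by
          simp only [hinner]
      _ = a⁻¹ * ∫⁻ x in B, a⁻¹ * ∫⁻ y in B, Fk (x, y) ∂μ ∂μ := by
          rw [hν, lintegral_smul_measure, smul_eq_mul]
      _ = a⁻¹ * (a⁻¹ * S) := by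
          rw [lintegral_const_mul' _ _ hainvtop, hS_alt]
  have hmin' : T ≤ a⁻¹ * (a⁻¹ * S) := hIν ▸ hmin ν hνprob
  have hsplit : S + ∫⁻ p in (B ×ˢ B)ᶜ, Fk p ∂(μ.prod μ) = T :=
    lintegral_add_compl Fk (hBmeas.prod hBmeas)
  have hofR : ENNReal.ofReal (R ^ 2 / 8) * b ≤ ∫⁻ p in (B ×ˢ B)ᶜ, Fk p ∂(μ.prod μ) := by
    have hsub : Bᶜ ×ˢ (Set.univ : Set E2) ⊆ (B ×ˢ B)ᶜ := by
      rintro ⟨x, y⟩ ⟨hx, -⟩ h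
      exact hx h.1
    calc ENNReal.ofReal (R ^ 2 / 8) * b
        = ENNReal.ofReal (R ^ 2 / 8) * (μ.prod μ) (Bᶜ ×ˢ Set.univ) := by
          rw [Measure.prod_prod, measure_univ, mul_one]
      _ ≤ ENNReal.ofReal (R ^ 2 / 8) * (μ.prod μ) ((B ×ˢ B)ᶜ) :=
          mul_le_mul_right (measure_mono hsub) _
      _ = ∫⁻ _ in (B ×ˢ B)ᶜ, ENNReal.ofReal (R ^ 2 / 8) ∂(μ.prod μ) :=
          (setLIntegral_const _ _).symm
      _ ≤ ∫⁻ p in (B ×ˢ B)ᶜ, Fk p ∂(μ.prod μ) := by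
          apply setLIntegral_mono measurable_Fk
          intro p hp
          by_cases hpd : p.1 = p.2
          · rw [Fk, if_pos hpd]; exact le_top
          · rw [Fk, if_neg hpd]
            apply ENNReal.ofReal_le_ofReal
            apply V_lower hR3 ?_ hpd
            rw [Set.mem_compl_iff, Set.mem_prod] at hp
            push_neg at hp
            by_cases h1 : p.1 ∈ B
            · right
              have h2 := hp h1
              rw [hB, Metric.mem_closedBall, dist_zero_right] at h2
              exact (not_le.mp h2).le
            · left
              rw [hB, Metric.mem_closedBall, dist_zero_right] at h1
              exact (not_le.mp h1).le
  have key1 : a * a * T ≤ S := by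
    calc a * a * T ≤ a * a * (a⁻¹ * (a⁻¹ * S)) := mul_le_mul_right hmin' _
      _ = (a * a⁻¹) * ((a * a⁻¹) * S) := by ring
      _ = S := by rw [ENNReal.mul_inv_cancel ha0 hatop, one_mul, one_mul]
  have key2 : a * a * T + ENNReal.ofReal (R ^ 2 / 8) * b ≤ T :=
    le_trans (add_le_add key1 hofR) hsplit.le
  have key3 : ENNReal.ofReal (R ^ 2 / 8) * b ≤ T - a * a * T :=
    ENNReal.le_sub_of_add_le_left (ENNReal.mul_ne_top (ENNReal.mul_ne_top hatop hatop) hTtop) key2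
  have hsubmul : T - a * a * T = (1 - a * a) * T := by
    rw [ENNReal.sub_mul (fun _ _ => hTtop), one_mul]
  have h1aa : 1 - a * a ≤ 3 * b := by
    have hab : a + b = 1 := by
      rw [hadef, hbdef, measure_add_measure_compl hBmeas, measure_univ]
    have hsq : (1:ℝ≥0∞) - a * a = a * b + b * a + b * b := by
      have he : (1:ℝ≥0∞) = a * a + (a * b + b * a + b * b) := by
        calc (1:ℝ≥0∞) = (a + b) * (a + b) := by rw [hab, one_mul]
          _ = a * a + (a * b + b * a + b * b) := by ring
      rw [he, ENNReal.add_sub_cancel_left (ENNReal.mul_ne_top hatop hatop)]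
    rw [hsq]
    have e1 : a * b ≤ b := by
      calc a * b ≤ 1 * b := mul_le_mul_left ha1 b
        _ = b := one_mul b
    have e2 : b * a ≤ b := by
      calc b * a ≤ b * 1 := mul_le_mul_right ha1 b
        _ = b := mul_one b
    have e3 : b * b ≤ b := by
      calc b * b ≤ b * 1 := mul_le_mul_right hb1 b
        _ = b := mul_one b
    calc a * b + b * a + b * b ≤ b + b + b := add_le_add (add_le_add e1 e2) e3
      _ = 3 * b := by ring
  have final : ENNReal.ofReal (R ^ 2 / 8) * b ≤ (3 * T) * b := by
    calc ENNReal.ofReal (R ^ 2 / 8) * b ≤ (1 - a * a) * T := key3.trans_eq hsubmul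
      _ ≤ (3 * b) * T := mul_le_mul_left h1aa T
      _ = (3 * T) * b := by ring
  have hfin : ENNReal.ofReal (R ^ 2 / 8) ≤ 3 * T := by
    have h := final
    rw [mul_comm (ENNReal.ofReal (R ^ 2 / 8)) b, mul_comm (3 * T) b] at h
    exact (ENNReal.mul_le_mul_iff_right hb0 hbtop).mp h
  exact absurd hfin (not_le.mpr hc)

end
end

section
/- For every probability measure μ on ℝ², I(μ) ≥ (1 − 2/e) ∫_{ℝ²} |x|² dμ(x). -/
open MeasureTheory Real
open scoped ENNReal Classical FourierTransform RealInnerProductSpace ComplexOrder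

noncomputable section

/-- The confinement bound `I(μ) ≥ (1 - 2/e) ∫ |x|² dμ` for every probability
measure `μ` on `ℝ²`. -/
theorem energy_confinement_bound (μ : Measure E2) (hμ : IsProbabilityMeasure μ) :
    ENNReal.ofReal (1 - 2 / Real.exp 1) * ∫⁻ x, (‖x‖₊ : ℝ≥0∞) ^ 2 ∂μ ≤ Ienergy μ := by
  have he : (0:ℝ) < Real.exp 1 := Real.exp_pos 1
  have hc0 : (0:ℝ) ≤ 1 - 2 / Real.exp 1 := by
    have h2 : (2:ℝ) ≤ Real.exp 1 := by
      have := Real.add_one_le_exp 1; linarith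
    have : (2:ℝ) / Real.exp 1 ≤ 1 := by
      rw [div_le_one he]; linarith
    linarith
  set c : ℝ := 1 - 2 / Real.exp 1 with hc
  set N : E2 → ℝ≥0∞ := fun x => (‖x‖₊ : ℝ≥0∞) ^ 2 with hN
  have hNmeas : Measurable N := by
    exact (measurable_nnnorm.comp measurable_id).coe_nnreal_ennreal.pow measurable_const
  have hNofReal : ∀ x : E2, ENNReal.ofReal (‖x‖ ^ 2) = N x := by
    intro x
    rw [ENNReal.ofReal_pow (norm_nonneg x), ofReal_norm, enorm_eq_nnnorm]
  -- pointwise bound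
  have key : ∀ p : E2 × E2,
      ENNReal.ofReal c * (N p.1 + N p.2) / 2 ≤
      (if p.1 = p.2 then (⊤ : ℝ≥0∞)
        else ENNReal.ofReal (V (p.1 - p.2) + (‖p.1‖ ^ 2 + ‖p.2‖ ^ 2) / 2)) := by
    intro p
    by_cases h : p.1 = p.2
    · simp [h]
    · rw [if_neg h]
      have hz : p.1 - p.2 ≠ 0 := sub_ne_zero.mpr h
      have hzn : 0 < ‖p.1 - p.2‖ := norm_pos_iff.mpr hz
      set a : ℝ := ‖p.1‖ ^ 2 with ha
      set b : ℝ := ‖p.2‖ ^ 2 with hb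
      have ha0 : 0 ≤ a := sq_nonneg _
      have hb0 : 0 ≤ b := sq_nonneg _
      -- real inequality
      have hreal : c * ((a + b) / 2) ≤ V (p.1 - p.2) + (a + b) / 2 := by
        have hlog : Real.log ‖p.1 - p.2‖ * Real.exp 1 ≤ a + b := by
          have h2' : Real.log (‖p.1 - p.2‖ ^ 2) ≤ ‖p.1 - p.2‖ ^ 2 / Real.exp 1 := by
            have ht : 0 < ‖p.1 - p.2‖ ^ 2 / Real.exp 1 := by positivity
            have hh := Real.log_le_sub_one_of_pos ht
            rw [Real.log_div (by positivity) (Real.exp_ne_zero 1), Real.log_exp] at hh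
            linarith
          rw [Real.log_pow] at h2'
          have h2'' : (2 : ℝ) * Real.log ‖p.1 - p.2‖ * Real.exp 1 ≤ ‖p.1 - p.2‖ ^ 2 := by
            have := (le_div_iff₀ he).mp h2'
            push_cast at this ⊢
            linarith
          have h3 : ‖p.1 - p.2‖ ^ 2 ≤ 2 * (a + b) := by
            have hns := norm_sub_le p.1 p.2
            have h4 : ‖p.1 - p.2‖ ^ 2 ≤ (‖p.1‖ + ‖p.2‖) ^ 2 := by
              apply sq_le_sq' <;> nlinarith [norm_nonneg p.1, norm_nonneg p.2, norm_nonneg (p.1 - p.2)]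
            rw [ha, hb]; nlinarith [sq_nonneg (‖p.1‖ - ‖p.2‖)]
          nlinarith
        have hVlb : -Real.log ‖p.1 - p.2‖ ≤ V (p.1 - p.2) := by
          have : 0 ≤ ((p.1 - p.2) 0) ^ 2 / ‖p.1 - p.2‖ ^ 2 := by positivity
          unfold V; linarith
        have hlog' : Real.log ‖p.1 - p.2‖ ≤ (a + b) / Real.exp 1 :=
          (le_div_iff₀ he).mpr hlog
        have hcs : c * ((a + b) / 2) = (a + b) / 2 - (a + b) / Real.exp 1 := by
          rw [hc]; field_simp
        linarith
      calc ENNReal.ofReal c * (N p.1 + N p.2) / 2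
          = ENNReal.ofReal (c * ((a + b) / 2)) := by
            rw [← hNofReal, ← hNofReal, ← ha, ← hb,
              ← ENNReal.ofReal_add ha0 hb0,
              ENNReal.ofReal_mul hc0, mul_div_assoc,
              ENNReal.ofReal_div_of_pos (by norm_num : (0:ℝ) < 2), ENNReal.ofReal_ofNat]
        _ ≤ _ := ENNReal.ofReal_le_ofReal hreal
  -- integrate
  have hint : ∫⁻ p : E2 × E2, ENNReal.ofReal c * (N p.1 + N p.2) / 2 ∂(μ.prod μ)
      = ENNReal.ofReal c * ∫⁻ x, N x ∂μ := by
    have hm1 : Measurable fun p : E2 × E2 => N p.1 := hNmeas.comp measurable_fst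
    have hm2 : Measurable fun p : E2 × E2 => N p.2 := hNmeas.comp measurable_snd
    have e1 : ∫⁻ p : E2 × E2, N p.1 ∂(μ.prod μ) = ∫⁻ x, N x ∂μ := by
      rw [lintegral_prod _ (hm1.aemeasurable)]
      simp [lintegral_const]
    have e2 : ∫⁻ p : E2 × E2, N p.2 ∂(μ.prod μ) = ∫⁻ x, N x ∂μ := by
      rw [lintegral_prod _ (hm2.aemeasurable)]
      simp [lintegral_const]
    calc ∫⁻ p : E2 × E2, ENNReal.ofReal c * (N p.1 + N p.2) / 2 ∂(μ.prod μ)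
        = ∫⁻ p : E2 × E2, ENNReal.ofReal c / 2 * (N p.1 + N p.2) ∂(μ.prod μ) := by
          congr 1; ext p; rw [ENNReal.mul_div_right_comm]
      _ = ENNReal.ofReal c / 2 * ∫⁻ p : E2 × E2, (N p.1 + N p.2) ∂(μ.prod μ) := by
          exact lintegral_const_mul (f := fun p : E2 × E2 => N p.1 + N p.2) _ (by fun_prop)
      _ = ENNReal.ofReal c / 2 * ((∫⁻ x, N x ∂μ) + ∫⁻ x, N x ∂μ) := by
          rw [lintegral_add_left hm1, e1, e2]
      _ = ENNReal.ofReal c * ∫⁻ x, N x ∂μ := by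
          rw [← two_mul, ← mul_assoc, ENNReal.div_mul_cancel (by norm_num) (by norm_num)]
  rw [← hint]
  exact lintegral_mono key


end
end

section
/- For all real numbers ξ₁ > 0 and ξ₂ > 0, one has ξ₁ ∫_{−π}^{π} ξ₁/(ξ₁² + (ξ₂ − cos θ)²) dθ + ξ₂ ∫_{−π}^{π} (ξ₂ − cos θ)/(ξ₁² + (ξ₂ − cos θ)²) dθ > 0. -/
open MeasureTheory Real
open scoped ENNReal Classical FourierTransform RealInnerProductSpace ComplexOrder

noncomputable section

namespace KeyPosAux

/-- The quartic denominator after the tan-half-angle substitution. -/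
def Pq (u v t : ℝ) : ℝ :=
  (u ^ 2 + (v + 1) ^ 2) * t ^ 4 + 2 * (u ^ 2 + v ^ 2 - 1) * t ^ 2 + (u ^ 2 + (v - 1) ^ 2)

/-- The transformed integrand. -/
def Fq (u v t : ℝ) : ℝ :=
  2 * ((u ^ 2 + v ^ 2 + v) * t ^ 2 + (u ^ 2 + v ^ 2 - v)) / Pq u v t

/-- The combined trigonometric integrand. -/
def hh (u v θ : ℝ) : ℝ :=
  (u ^ 2 + v ^ 2 - v * Real.cos θ) / (u ^ 2 + (v - Real.cos θ) ^ 2)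

lemma Pq_pos {u : ℝ} (v : ℝ) (hu : 0 < u) (t : ℝ) : 0 < Pq u v t := by
  have h : Pq u v t = u ^ 2 * (1 + t ^ 2) ^ 2 + (v * (1 + t ^ 2) - (1 - t ^ 2)) ^ 2 := by
    unfold Pq; ring
  rw [h]
  have h1 : 0 < u ^ 2 * (1 + t ^ 2) ^ 2 :=
    mul_pos (pow_pos hu 2) (pow_pos (by positivity) 2)
  nlinarith [sq_nonneg (v * (1 + t ^ 2) - (1 - t ^ 2))]

lemma cos_two_arctan (t : ℝ) : Real.cos (2 * Real.arctan t) = (1 - t ^ 2) / (1 + t ^ 2) := by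
  have h1 : (0:ℝ) < 1 + t ^ 2 := by positivity
  rw [Real.cos_two_mul, Real.cos_arctan]
  rw [div_pow, one_pow, Real.sq_sqrt h1.le]
  field_simp
  ring

lemma transform {u : ℝ} (v : ℝ) (hu : 0 < u) (t : ℝ) :
    (2 / (1 + t ^ 2)) * hh u v (2 * Real.arctan t) = Fq u v t := by
  have h1 : (0:ℝ) < 1 + t ^ 2 := by positivity
  have hd : 0 < u ^ 2 + (v - (1 - t ^ 2) / (1 + t ^ 2)) ^ 2 :=
    add_pos_of_pos_of_nonneg (pow_pos hu 2) (sq_nonneg _)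
  have hp := Pq_pos v hu t
  have hp' : ((u ^ 2 + (v + 1) ^ 2) * t ^ 4 + 2 * (u ^ 2 + v ^ 2 - 1) * t ^ 2
      + (u ^ 2 + (v - 1) ^ 2)) ≠ 0 := by unfold Pq at hp; exact hp.ne'
  unfold hh Fq
  rw [cos_two_arctan]
  have key : u ^ 2 + (v - (1 - t ^ 2) / (1 + t ^ 2)) ^ 2 = Pq u v t / (1 + t ^ 2) ^ 2 := by
    unfold Pq; field_simp; ring
  rw [key]
  field_simp [hp.ne', h1.ne']
  ring

lemma reflect (A B C a b q t : ℝ) (hq : 0 < q) (ht : 0 < t) (hC : C = A * q ^ 2)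
    (hP : 0 < A * t ^ 4 + B * t ^ 2 + C)
    (hP' : 0 < A * (q / t) ^ 4 + B * (q / t) ^ 2 + C) :
    2 * (a * t ^ 2 + b) / (A * t ^ 4 + B * t ^ 2 + C)
      + (q / t ^ 2) * (2 * (a * (q / t) ^ 2 + b) / (A * (q / t) ^ 4 + B * (q / t) ^ 2 + C))
      = 2 * (a * q + b) * (t ^ 2 + q) / (q * (A * t ^ 4 + B * t ^ 2 + C)) := by
  subst hC
  have h1 := hP.ne'
  have key : A * (q / t) ^ 4 + B * (q / t) ^ 2 + A * q ^ 2
      = q ^ 2 * (A * t ^ 4 + B * t ^ 2 + A * q ^ 2) / t ^ 4 := by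
    field_simp
    ring
  rw [key]
  field_simp [ht.ne', hq.ne']
  ring

end KeyPosAux

open KeyPosAux

/-- The key positivity: for all `ξ₁ > 0`, `ξ₂ > 0`,
`ξ₁ ∫_{-π}^{π} ξ₁/(ξ₁² + (ξ₂-cos θ)²) dθ
 + ξ₂ ∫_{-π}^{π} (ξ₂-cos θ)/(ξ₁² + (ξ₂-cos θ)²) dθ > 0`. -/
theorem key_positivity (ξ1 ξ2 : ℝ) (h1 : 0 < ξ1) (h2 : 0 < ξ2) :
    0 < ξ1 * (∫ θ in (-π)..π, ξ1 / (ξ1 ^ 2 + (ξ2 - Real.cos θ) ^ 2))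
        + ξ2 * (∫ θ in (-π)..π, (ξ2 - Real.cos θ) / (ξ1 ^ 2 + (ξ2 - Real.cos θ) ^ 2)) := by
  -- positivity of denominators
  have hDpos : ∀ c : ℝ, 0 < ξ1 ^ 2 + (ξ2 - c) ^ 2 := fun c =>
    add_pos_of_pos_of_nonneg (pow_pos h1 2) (sq_nonneg _)
  have hcontD : Continuous fun θ : ℝ => ξ1 ^ 2 + (ξ2 - Real.cos θ) ^ 2 := by continuity
  have hcont1 : Continuous fun θ : ℝ => ξ1 / (ξ1 ^ 2 + (ξ2 - Real.cos θ) ^ 2) :=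
    continuous_const.div hcontD fun θ => (hDpos _).ne'
  have hcont2 : Continuous fun θ : ℝ => (ξ2 - Real.cos θ) / (ξ1 ^ 2 + (ξ2 - Real.cos θ) ^ 2) :=
    (continuous_const.sub Real.continuous_cos).div hcontD fun θ => (hDpos _).ne'
  have hconth : Continuous (hh ξ1 ξ2) := by
    unfold hh
    exact (continuous_const.sub (continuous_const.mul Real.continuous_cos)).div hcontD
      fun θ => (hDpos _).ne'
  -- Step 1: combine the two integrals
  have e1 : ξ1 * (∫ θ in (-π)..π, ξ1 / (ξ1 ^ 2 + (ξ2 - Real.cos θ) ^ 2))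
        + ξ2 * (∫ θ in (-π)..π, (ξ2 - Real.cos θ) / (ξ1 ^ 2 + (ξ2 - Real.cos θ) ^ 2))
      = ∫ θ in (-π)..π, hh ξ1 ξ2 θ := by
    rw [← intervalIntegral.integral_const_mul, ← intervalIntegral.integral_const_mul,
      ← intervalIntegral.integral_add
        ((show Continuous fun θ : ℝ => ξ1 * (ξ1 / (ξ1 ^ 2 + (ξ2 - Real.cos θ) ^ 2)) from continuous_const.mul hcont1).intervalIntegrable _ _)
        ((show Continuous fun θ : ℝ => ξ2 * ((ξ2 - Real.cos θ) / (ξ1 ^ 2 + (ξ2 - Real.cos θ) ^ 2)) from continuous_const.mul hcont2).intervalIntegrable _ _)]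
    apply intervalIntegral.integral_congr
    intro θ _
    have hd := (hDpos (Real.cos θ)).ne'
    unfold hh
    field_simp
    ring
  -- Step 2: evenness
  have e2 : (∫ θ in (-π)..π, hh ξ1 ξ2 θ) = 2 * ∫ θ in (0:ℝ)..π, hh ξ1 ξ2 θ := by
    rw [← intervalIntegral.integral_add_adjacent_intervals (a := -π) (b := 0) (c := π)
      (hconth.intervalIntegrable _ _) (hconth.intervalIntegrable _ _)]
    have hsymm : (∫ θ in (-π)..(0:ℝ), hh ξ1 ξ2 θ) = ∫ θ in (0:ℝ)..π, hh ξ1 ξ2 θ := by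
      have h := intervalIntegral.integral_comp_neg (a := 0) (b := π) (f := hh ξ1 ξ2)
      simp only [neg_zero] at h
      rw [← h]
      apply intervalIntegral.integral_congr
      intro θ _
      simp only [hh, Real.cos_neg]
    rw [hsymm]; ring
  -- Step 3: to a set integral on Ioo
  have e3 : (∫ θ in (0:ℝ)..π, hh ξ1 ξ2 θ) = ∫ θ in Set.Ioo (0:ℝ) π, hh ξ1 ξ2 θ := by
    rw [intervalIntegral.integral_of_le Real.pi_pos.le, integral_Ioc_eq_integral_Ioo]
  -- Step 4: tan-half-angle substitution
  have himg : (fun t : ℝ => 2 * Real.arctan t) '' Set.Ioi 0 = Set.Ioo 0 π := by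
    ext x
    simp only [Set.mem_image, Set.mem_Ioi, Set.mem_Ioo]
    constructor
    · rintro ⟨t, ht, rfl⟩
      have h0 : 0 < Real.arctan t := by
        have := Real.arctan_strictMono ht
        rwa [Real.arctan_zero] at this
      have hlt := Real.arctan_lt_pi_div_two t
      constructor <;> linarith
    · rintro ⟨hx0, hxπ⟩
      refine ⟨Real.tan (x / 2), ?_, ?_⟩
      · exact Real.tan_pos_of_pos_of_lt_pi_div_two (by linarith) (by linarith)
      · rw [Real.arctan_tan (by linarith [Real.pi_pos]) (by linarith)]; ring
  have hinj : Set.InjOn (fun t : ℝ => 2 * Real.arctan t) (Set.Ioi 0) := by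
    intro x _ y _ hxy
    simp only at hxy
    exact Real.arctan_injective (by linarith)
  have hder : ∀ t ∈ Set.Ioi (0:ℝ),
      HasDerivWithinAt (fun t : ℝ => 2 * Real.arctan t) (2 / (1 + t ^ 2)) (Set.Ioi 0) t := by
    intro t _
    have h := (Real.hasDerivAt_arctan t).const_mul 2
    rw [mul_one_div] at h
    exact h.hasDerivWithinAt
  have habs : ∀ t : ℝ, |2 / (1 + t ^ 2)| • hh ξ1 ξ2 (2 * Real.arctan t) = Fq ξ1 ξ2 t := by
    intro t
    rw [smul_eq_mul, abs_of_pos (by positivity)]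
    exact transform ξ2 h1 t
  have e4 : (∫ θ in Set.Ioo (0:ℝ) π, hh ξ1 ξ2 θ) = ∫ t in Set.Ioi (0:ℝ), Fq ξ1 ξ2 t := by
    rw [← himg, integral_image_eq_integral_abs_deriv_smul measurableSet_Ioi hder hinj]
    exact setIntegral_congr_fun measurableSet_Ioi fun t _ => habs t
  -- integrability of Fq on Ioi 0
  have hFint : IntegrableOn (Fq ξ1 ξ2) (Set.Ioi (0:ℝ)) := by
    have hIoo : IntegrableOn (hh ξ1 ξ2) (Set.Ioo 0 π) :=
      (hconth.integrableOn_Icc).mono_set Set.Ioo_subset_Icc_self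
    rw [← himg,
      integrableOn_image_iff_integrableOn_abs_deriv_smul measurableSet_Ioi hder hinj] at hIoo
    exact hIoo.congr_fun (fun t _ => habs t) measurableSet_Ioi
  -- the reflection parameter q with C = A q²
  obtain ⟨q, hqpos, hq2⟩ : ∃ q : ℝ, 0 < q ∧
      ξ1 ^ 2 + (ξ2 - 1) ^ 2 = (ξ1 ^ 2 + (ξ2 + 1) ^ 2) * q ^ 2 := by
    have hCpos : 0 < ξ1 ^ 2 + (ξ2 - 1) ^ 2 :=
      add_pos_of_pos_of_nonneg (pow_pos h1 2) (sq_nonneg _)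
    have hApos : 0 < ξ1 ^ 2 + (ξ2 + 1) ^ 2 :=
      add_pos_of_pos_of_nonneg (pow_pos h1 2) (sq_nonneg _)
    refine ⟨Real.sqrt ((ξ1 ^ 2 + (ξ2 - 1) ^ 2) / (ξ1 ^ 2 + (ξ2 + 1) ^ 2)),
      Real.sqrt_pos.mpr (div_pos hCpos hApos), ?_⟩
    rw [Real.sq_sqrt (div_pos hCpos hApos).le]
    field_simp
  have himg2 : (fun t : ℝ => q / t) '' Set.Ioi 0 = Set.Ioi (0:ℝ) := by
    ext x
    simp only [Set.mem_image, Set.mem_Ioi]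
    constructor
    · rintro ⟨t, ht, rfl⟩
      exact div_pos hqpos ht
    · intro hx
      exact ⟨q / x, div_pos hqpos hx, by field_simp⟩
  have hinj2 : Set.InjOn (fun t : ℝ => q / t) (Set.Ioi 0) := by
    intro x hx y hy hxy
    simp only at hxy
    rw [div_eq_div_iff (ne_of_gt hx) (ne_of_gt hy)] at hxy
    exact mul_left_cancel₀ hqpos.ne' hxy.symm
  have hder2 : ∀ t ∈ Set.Ioi (0:ℝ),
      HasDerivWithinAt (fun t : ℝ => q / t) (-(q / t ^ 2)) (Set.Ioi 0) t := by
    intro t ht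
    have h := (hasDerivAt_inv (ne_of_gt ht)).const_mul q
    have heq : q * -((t : ℝ) ^ 2)⁻¹ = -(q / t ^ 2) := by field_simp
    rw [heq] at h
    have heq2 : (fun y : ℝ => q * y⁻¹) = fun y : ℝ => q / y := by
      funext y; rw [div_eq_mul_inv]
    rw [heq2] at h
    exact h.hasDerivWithinAt
  have habs2 : ∀ t ∈ Set.Ioi (0:ℝ),
      |(-(q / t ^ 2))| • Fq ξ1 ξ2 (q / t) = (q / t ^ 2) * Fq ξ1 ξ2 (q / t) := by
    intro t ht
    rw [smul_eq_mul, abs_neg, abs_of_pos (div_pos hqpos (pow_pos ht 2))]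
  have e5 : (∫ t in Set.Ioi (0:ℝ), Fq ξ1 ξ2 t)
      = ∫ t in Set.Ioi (0:ℝ), (q / t ^ 2) * Fq ξ1 ξ2 (q / t) := by
    conv_lhs => rw [← himg2]
    rw [integral_image_eq_integral_abs_deriv_smul measurableSet_Ioi hder2 hinj2]
    exact setIntegral_congr_fun measurableSet_Ioi habs2
  have hRint : IntegrableOn (fun t => (q / t ^ 2) * Fq ξ1 ξ2 (q / t)) (Set.Ioi (0:ℝ)) := by
    have h := hFint
    rw [← himg2,
      integrableOn_image_iff_integrableOn_abs_deriv_smul measurableSet_Ioi hder2 hinj2] at h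
    exact h.congr_fun habs2 measurableSet_Ioi
  -- the symmetrized integrand
  have e6 : ∀ t ∈ Set.Ioi (0:ℝ), Fq ξ1 ξ2 t + (q / t ^ 2) * Fq ξ1 ξ2 (q / t)
      = 2 * ((ξ1 ^ 2 + ξ2 ^ 2 + ξ2) * q + (ξ1 ^ 2 + ξ2 ^ 2 - ξ2)) * (t ^ 2 + q)
        / (q * ((ξ1 ^ 2 + (ξ2 + 1) ^ 2) * t ^ 4 + 2 * (ξ1 ^ 2 + ξ2 ^ 2 - 1) * t ^ 2
            + (ξ1 ^ 2 + (ξ2 - 1) ^ 2))) := by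
    intro t ht
    have hP := Pq_pos ξ2 h1 t
    have hP' := Pq_pos ξ2 h1 (q / t)
    unfold Pq at hP hP'
    unfold Fq Pq
    exact reflect (ξ1 ^ 2 + (ξ2 + 1) ^ 2) (2 * (ξ1 ^ 2 + ξ2 ^ 2 - 1)) (ξ1 ^ 2 + (ξ2 - 1) ^ 2)
      (ξ1 ^ 2 + ξ2 ^ 2 + ξ2) (ξ1 ^ 2 + ξ2 ^ 2 - ξ2) q t hqpos ht hq2 hP hP'
  -- key positivity of the coefficient
  have ha : 0 < ξ1 ^ 2 + ξ2 ^ 2 + ξ2 := add_pos_of_nonneg_of_pos (by positivity) h2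
  have hApos : 0 < ξ1 ^ 2 + (ξ2 + 1) ^ 2 :=
    add_pos_of_pos_of_nonneg (pow_pos h1 2) (sq_nonneg _)
  have hab : 0 < (ξ1 ^ 2 + ξ2 ^ 2 + ξ2) * q + (ξ1 ^ 2 + ξ2 ^ 2 - ξ2) := by
    have hsq : (ξ1 ^ 2 + ξ2 ^ 2 - ξ2) ^ 2 < ((ξ1 ^ 2 + ξ2 ^ 2 + ξ2) * q) ^ 2 := by
      have hAq : (ξ1 ^ 2 + (ξ2 + 1) ^ 2) * ((ξ1 ^ 2 + ξ2 ^ 2 + ξ2) * q) ^ 2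
          = (ξ1 ^ 2 + ξ2 ^ 2 + ξ2) ^ 2 * (ξ1 ^ 2 + (ξ2 - 1) ^ 2) := by
        rw [hq2]; ring
      have hlt : (ξ1 ^ 2 + (ξ2 + 1) ^ 2) * (ξ1 ^ 2 + ξ2 ^ 2 - ξ2) ^ 2
          < (ξ1 ^ 2 + (ξ2 + 1) ^ 2) * ((ξ1 ^ 2 + ξ2 ^ 2 + ξ2) * q) ^ 2 := by
        rw [hAq]
        nlinarith [mul_pos (mul_pos h1 h1) h2]
      exact lt_of_mul_lt_mul_left hlt hApos.le
    have hsq' : (-(ξ1 ^ 2 + ξ2 ^ 2 - ξ2)) ^ 2 < ((ξ1 ^ 2 + ξ2 ^ 2 + ξ2) * q) ^ 2 := by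
      rw [neg_pow]; simpa using hsq
    have := lt_of_pow_lt_pow_left₀ 2 (mul_pos ha hqpos).le hsq'
    linarith
  have hGpos : ∀ t : ℝ,
      0 < 2 * ((ξ1 ^ 2 + ξ2 ^ 2 + ξ2) * q + (ξ1 ^ 2 + ξ2 ^ 2 - ξ2)) * (t ^ 2 + q)
        / (q * ((ξ1 ^ 2 + (ξ2 + 1) ^ 2) * t ^ 4 + 2 * (ξ1 ^ 2 + ξ2 ^ 2 - 1) * t ^ 2
            + (ξ1 ^ 2 + (ξ2 - 1) ^ 2))) := by
    intro t
    have hP := Pq_pos ξ2 h1 t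
    unfold Pq at hP
    have ht2 : 0 < t ^ 2 + q := add_pos_of_nonneg_of_pos (sq_nonneg t) hqpos
    exact div_pos (mul_pos (by linarith) ht2) (mul_pos hqpos hP)
  -- assemble
  have e7 : (∫ t in Set.Ioi (0:ℝ), Fq ξ1 ξ2 t)
        + (∫ t in Set.Ioi (0:ℝ), (q / t ^ 2) * Fq ξ1 ξ2 (q / t))
      = ∫ t in Set.Ioi (0:ℝ),
          2 * ((ξ1 ^ 2 + ξ2 ^ 2 + ξ2) * q + (ξ1 ^ 2 + ξ2 ^ 2 - ξ2)) * (t ^ 2 + q)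
          / (q * ((ξ1 ^ 2 + (ξ2 + 1) ^ 2) * t ^ 4 + 2 * (ξ1 ^ 2 + ξ2 ^ 2 - 1) * t ^ 2
              + (ξ1 ^ 2 + (ξ2 - 1) ^ 2))) := by
    rw [← integral_add hFint hRint]
    exact setIntegral_congr_fun measurableSet_Ioi e6
  have hGint : IntegrableOn (fun t : ℝ =>
      2 * ((ξ1 ^ 2 + ξ2 ^ 2 + ξ2) * q + (ξ1 ^ 2 + ξ2 ^ 2 - ξ2)) * (t ^ 2 + q)
        / (q * ((ξ1 ^ 2 + (ξ2 + 1) ^ 2) * t ^ 4 + 2 * (ξ1 ^ 2 + ξ2 ^ 2 - 1) * t ^ 2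
            + (ξ1 ^ 2 + (ξ2 - 1) ^ 2)))) (Set.Ioi (0:ℝ)) :=
    MeasureTheory.IntegrableOn.congr_fun (hFint.add hRint) e6 measurableSet_Ioi
  have hpos : 0 < ∫ t in Set.Ioi (0:ℝ),
      2 * ((ξ1 ^ 2 + ξ2 ^ 2 + ξ2) * q + (ξ1 ^ 2 + ξ2 ^ 2 - ξ2)) * (t ^ 2 + q)
        / (q * ((ξ1 ^ 2 + (ξ2 + 1) ^ 2) * t ^ 4 + 2 * (ξ1 ^ 2 + ξ2 ^ 2 - 1) * t ^ 2
            + (ξ1 ^ 2 + (ξ2 - 1) ^ 2))) := by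
    rw [setIntegral_pos_iff_support_of_nonneg_ae
      (Filter.Eventually.of_forall fun t => (hGpos t).le) hGint]
    refine lt_of_lt_of_le ?_ (measure_mono (fun t ht => ⟨(hGpos t).ne', ht⟩ :
      Set.Ioi (0:ℝ) ⊆ Function.support _ ∩ Set.Ioi 0))
    rw [Real.volume_Ioi]
    exact ENNReal.zero_lt_top
  rw [e1, e2, e3, e4]
  linarith [e5, e7, hpos]

end
end
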